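/- Let A be a self-adjoint symmetric (A = Aᵀ) d×d matrix with traceless part A₀ = A − (Tr[A]/d)𝟙, and let ρ be any density matrix. Define V_U = ((d+1)/(d+2))·(Tr[A₀²] + 2Tr[ρA₀²]) − Tr[ρA₀]² and V_R = ((d+2)/(2d+8))·(Tr[A₀²] + 4Tr[ρA₀²]) − Tr[ρA₀]². Then V_U − V_R = ((d+1)/(d+2) − (d+2)/(2d+8))·Tr[A₀²] + (2(d+1)/(d+2) − 4(d+2)/(2d+8))·Tr[ρA₀²] ≥ 0 for all d ≥ 2; in particular V_R ≤ V_U. -/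

import Mathlib

open Matrix ComplexOrder

lemma psd_trace_re_nonneg {d : ℕ} {M : Matrix (Fin d) (Fin d) ℂ}
    (h : M.PosSemidef) : 0 ≤ M.trace.re := by
  rw [Matrix.trace]
  have h1 : ∀ i, 0 ≤ (M i i).re := by
    intro i
    have h0 : 0 ≤ M i i := h.diag_nonneg
    exact (Complex.le_def.mp h0).1
  calc (0:ℝ) = ∑ i, (0:ℝ) := by simp
  _ ≤ ∑ i, (M i i).re := Finset.sum_le_sum fun i _ => h1 i
  _ = (∑ i, Matrix.diag M i).re := by rw [Complex.re_sum]; rfl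

theorem real_variance_le_unitary_variance (d : ℕ) (hd : 2 ≤ d)
    (A ρ : Matrix (Fin d) (Fin d) ℂ)
    (hA : A.IsHermitian) (hAsym : A = Aᵀ)
    (hρ : ρ.PosSemidef) (hρ1 : ρ.trace = 1) :
    let A0 : Matrix (Fin d) (Fin d) ℂ := A - (A.trace / d) • (1 : Matrix (Fin d) (Fin d) ℂ)
    let t1 : ℝ := ((A0 * A0).trace).re
    let t2 : ℝ := ((ρ * (A0 * A0)).trace).re
    let t3 : ℝ := ((ρ * A0).trace).re
    let VU : ℝ := ((d + 1) / (d + 2)) * (t1 + 2 * t2) - t3 ^ 2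
    let VR : ℝ := ((d + 2) / (2 * d + 8)) * (t1 + 4 * t2) - t3 ^ 2
    VU - VR = ((d + 1) / (d + 2) - (d + 2) / (2 * d + 8)) * t1
        + (2 * (d + 1) / (d + 2) - 4 * (d + 2) / (2 * d + 8)) * t2 ∧
      0 ≤ VU - VR ∧ VR ≤ VU := by
  intro A0 t1 t2 t3 VU VR
  -- A0 is Hermitian
  have htrA : (starRingEnd ℂ) A.trace = A.trace := by
    have h := Matrix.trace_conjTranspose A
    rw [hA.eq] at h
    exact h.symm
  have hA0 : A0.IsHermitian := by
    apply Matrix.IsHermitian.sub hA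
    rw [Matrix.IsHermitian, Matrix.conjTranspose_smul, Matrix.conjTranspose_one]
    congr 1
    simp only [RCLike.star_def, map_div₀, htrA, map_natCast]
  -- A0 * A0 is PSD
  have hA02 : (A0 * A0).PosSemidef := by
    have := Matrix.posSemidef_conjTranspose_mul_self A0
    rwa [hA0.eq] at this
  have ht1 : 0 ≤ t1 := psd_trace_re_nonneg hA02
  -- t2 ≥ 0 : write ρ = S * S with S = hρ.sqrt
  have ht2 : 0 ≤ t2 := by
    open MatrixOrder in set S := CFC.sqrt ρ with hS
    have hSS : S * S = ρ := by open MatrixOrder in exact CFC.sqrt_mul_sqrt_self ρ hρ.nonneg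
    have hSH : S.IsHermitian := by open MatrixOrder in exact (CFC.sqrt_nonneg ρ).posSemidef.1
    have key : (ρ * (A0 * A0)).trace = ((A0 * S)ᴴ * (A0 * S)).trace := by
      rw [Matrix.conjTranspose_mul, hA0.eq, hSH.eq, ← hSS,
        mul_assoc S S (A0 * A0), Matrix.trace_mul_comm S (S * (A0 * A0))]
      congr 1
      noncomm_ring
    show (0:ℝ) ≤ ((ρ * (A0 * A0)).trace).re
    rw [key]
    exact psd_trace_re_nonneg (Matrix.posSemidef_conjTranspose_mul_self _)
  -- coefficients
  have hx : (2:ℝ) ≤ (d:ℝ) := by exact_mod_cast hd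
  have hp1 : (0:ℝ) < (d:ℝ) + 2 := by linarith
  have hp2 : (0:ℝ) < 2 * (d:ℝ) + 8 := by linarith
  have hc1 : (0:ℝ) ≤ ((d:ℝ) + 1) / ((d:ℝ) + 2) - ((d:ℝ) + 2) / (2 * (d:ℝ) + 8) := by
    rw [sub_nonneg, div_le_div_iff₀ hp2 hp1]
    nlinarith
  have hc2 : (0:ℝ) ≤ 2 * ((d:ℝ) + 1) / ((d:ℝ) + 2) - 4 * ((d:ℝ) + 2) / (2 * (d:ℝ) + 8) := by
    rw [sub_nonneg, div_le_div_iff₀ hp2 hp1]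
    nlinarith
  have heq : VU - VR = (((d:ℝ) + 1) / ((d:ℝ) + 2) - ((d:ℝ) + 2) / (2 * (d:ℝ) + 8)) * t1
      + (2 * ((d:ℝ) + 1) / ((d:ℝ) + 2) - 4 * ((d:ℝ) + 2) / (2 * (d:ℝ) + 8)) * t2 := by
    show ((d:ℝ) + 1) / ((d:ℝ) + 2) * (t1 + 2 * t2) - t3 ^ 2
        - (((d:ℝ) + 2) / (2 * (d:ℝ) + 8) * (t1 + 4 * t2) - t3 ^ 2) = _
    ring
  have hnn : 0 ≤ VU - VR := by
    rw [heq]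
    exact add_nonneg (mul_nonneg hc1 ht1) (mul_nonneg hc2 ht2)
  exact ⟨heq, hnn, by linarith⟩
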